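/- Let b ∈ ℝ and V : K → ℝ, and let μ : ℝ → (K → ℝ) be a family such that for each h ∈ ℝ, μ_h is a probability distribution stationary for the perturbed rates W(x,y) e^{(b h / 2)(V(y) − V(x))}. Define F(h) := ∑_{x,y} μ_h(x) W(x,y) (1 − e^{(b h / 2)(V(y) − V(x))}). Then the function h ↦ F(h) + (b h / 4) ∑_x μ_h(x) (L V)(x) is o(h²) as h → 0 (little-o in the sense of Asymptotics.IsLittleO at 0 with respect to h²). (This is the content of Proposition 3: the dynamical fluctuation functional satisfies I(μ_h) = −(b h / 4) ∑_x μ_h(x)(LV)(x) + o(h²).) -/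

import Mathlib

open Asymptotics

private lemma g_cube_bound (u : ℝ) (hu : |u| ≤ 1) :
    |1 - Real.exp u + u / 2 * (1 + Real.exp u)| ≤ |u| ^ 3 := by
  have hr := Real.exp_bound hu (n := 3) (by norm_num)
  have hsum : ∑ m ∈ Finset.range 3, u ^ m / m.factorial = 1 + u + u ^ 2 / 2 := by
    simp [Finset.sum_range_succ, Nat.factorial]
  rw [hsum] at hr
  set r := Real.exp u - (1 + u + u ^ 2 / 2) with hrdef
  have hexp : Real.exp u = 1 + u + u ^ 2 / 2 + r := by rw [hrdef]; ring
  have hrb : |r| ≤ |u| ^ 3 * (4 / (6 * 3)) := by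
    convert hr using 2
    norm_num [Nat.factorial]
  have hg : 1 - Real.exp u + u / 2 * (1 + Real.exp u) = u ^ 3 / 4 + (u / 2 - 1) * r := by
    rw [hexp]; ring
  have h1 : |u / 2 - 1| ≤ 3 / 2 := by
    rw [abs_le] at hu ⊢; constructor <;> linarith [hu.1, hu.2]
  have h2 : |u ^ 3 / 4| = |u| ^ 3 / 4 := by
    rw [abs_div, abs_pow]; norm_num
  calc |1 - Real.exp u + u / 2 * (1 + Real.exp u)|
      = |u ^ 3 / 4 + (u / 2 - 1) * r| := by rw [hg]
    _ ≤ |u ^ 3 / 4| + |(u / 2 - 1) * r| := abs_add_le _ _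
    _ = |u| ^ 3 / 4 + |u / 2 - 1| * |r| := by rw [h2, abs_mul]
    _ ≤ |u| ^ 3 / 4 + (3 / 2) * (|u| ^ 3 * (4 / (6 * 3))) := by
        gcongr
    _ ≤ |u| ^ 3 := by nlinarith [pow_nonneg (abs_nonneg u) 3]

private lemma g_littleo (b c : ℝ) :
    (fun h : ℝ => 1 - Real.exp (b * h / 2 * c)
        + b * h / 4 * c * (1 + Real.exp (b * h / 2 * c)))
      =o[nhds 0] fun h : ℝ => h ^ 2 := by
  set A := |b| * |c| / 2 with hA
  have hA0 : 0 ≤ A := by positivity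
  have hO : (fun h : ℝ => 1 - Real.exp (b * h / 2 * c)
        + b * h / 4 * c * (1 + Real.exp (b * h / 2 * c)))
      =O[nhds 0] fun h : ℝ => h ^ 3 := by
    rw [isBigO_iff]
    refine ⟨A ^ 3, ?_⟩
    have hev : ∀ᶠ h : ℝ in nhds 0, |h| ≤ 1 / (A + 1) := by
      have : Filter.Tendsto (fun h : ℝ => |h|) (nhds 0) (nhds 0) := by
        simpa using (continuous_abs.tendsto (0 : ℝ))
      exact this.eventually_le_const (div_pos one_pos (by linarith))
    filter_upwards [hev] with h hh
    have huabs : |b * h / 2 * c| = A * |h| := by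
      rw [hA]; rw [abs_mul, abs_div, abs_mul]; norm_num; ring
    have hu1 : |b * h / 2 * c| ≤ 1 := by
      rw [huabs]
      calc A * |h| ≤ A * (1 / (A + 1)) := by gcongr
        _ ≤ 1 := by
            rw [mul_one_div]
            exact div_le_one_of_le₀ (by linarith) (by linarith)
    have key := g_cube_bound (b * h / 2 * c) hu1
    have harg : b * h / 2 * c / 2 = b * h / 4 * c := by ring
    rw [harg] at key
    calc ‖1 - Real.exp (b * h / 2 * c) + b * h / 4 * c * (1 + Real.exp (b * h / 2 * c))‖
        ≤ |b * h / 2 * c| ^ 3 := key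
      _ = A ^ 3 * |h| ^ 3 := by rw [huabs]; ring
      _ = A ^ 3 * ‖h ^ 3‖ := by rw [Real.norm_eq_abs, abs_pow]
  exact hO.trans_isLittleO (isLittleO_pow_pow (by norm_num))

theorem dynamical_fluctuation_functional_expansion
    {K : Type*} [Fintype K] [Nonempty K]
    (W : K → K → ℝ) (hW : ∀ x y : K, x ≠ y → 0 ≤ W x y)
    (b : ℝ) (V : K → ℝ)
    (μ : ℝ → K → ℝ)
    (hμprob : ∀ h : ℝ, (∀ x, 0 ≤ μ h x) ∧ ∑ x, μ h x = 1)
    (hμstat : ∀ h : ℝ, ∀ f : K → ℝ,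
      ∑ x, μ h x *
        (∑ y, (W x y * Real.exp (b * h / 2 * (V y - V x))) * (f y - f x)) = 0) :
    (fun h : ℝ =>
        (∑ x, ∑ y, μ h x * W x y * (1 - Real.exp (b * h / 2 * (V y - V x))))
          + b * h / 4 * ∑ x, μ h x * (∑ y, W x y * (V y - V x)))
      =o[nhds 0] (fun h : ℝ => h ^ 2) := by
  have heq : ∀ h : ℝ,
      (∑ x, ∑ y, μ h x * W x y * (1 - Real.exp (b * h / 2 * (V y - V x))))
          + b * h / 4 * ∑ x, μ h x * (∑ y, W x y * (V y - V x))
      = ∑ x, ∑ y, μ h x * W x y *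
          (1 - Real.exp (b * h / 2 * (V y - V x))
            + b * h / 4 * (V y - V x) * (1 + Real.exp (b * h / 2 * (V y - V x)))) := by
    intro h
    have hs := hμstat h V
    have hzero : b * h / 4 *
        (∑ x, μ h x * (∑ y, (W x y * Real.exp (b * h / 2 * (V y - V x))) * (V y - V x)))
        = 0 := by rw [hs]; ring
    have hexpand : ∑ x, ∑ y, μ h x * W x y *
          (1 - Real.exp (b * h / 2 * (V y - V x))
            + b * h / 4 * (V y - V x) * (1 + Real.exp (b * h / 2 * (V y - V x))))
        = (∑ x, ∑ y, μ h x * W x y * (1 - Real.exp (b * h / 2 * (V y - V x))))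
          + b * h / 4 * (∑ x, μ h x * (∑ y, W x y * (V y - V x)))
          + b * h / 4 *
            (∑ x, μ h x * (∑ y, (W x y * Real.exp (b * h / 2 * (V y - V x))) * (V y - V x))) := by
      simp only [Finset.mul_sum, ← Finset.sum_add_distrib]
      refine Finset.sum_congr rfl fun x _ => ?_
      refine Finset.sum_congr rfl fun y _ => ?_
      ring
    rw [hexpand, hzero, add_zero]
  have hcong : (fun h : ℝ =>
        (∑ x, ∑ y, μ h x * W x y * (1 - Real.exp (b * h / 2 * (V y - V x))))
          + b * h / 4 * ∑ x, μ h x * (∑ y, W x y * (V y - V x)))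
      = fun h : ℝ => ∑ x, ∑ y, μ h x * W x y *
          (1 - Real.exp (b * h / 2 * (V y - V x))
            + b * h / 4 * (V y - V x) * (1 + Real.exp (b * h / 2 * (V y - V x)))) :=
    funext heq
  rw [hcong]
  refine Asymptotics.IsLittleO.fun_sum fun x _ => ?_
  refine Asymptotics.IsLittleO.fun_sum fun y _ => ?_
  have hbdd : (fun h : ℝ => μ h x * W x y) =O[nhds 0] (fun _ : ℝ => (1 : ℝ)) := by
    rw [isBigO_iff]
    refine ⟨|W x y|, Filter.Eventually.of_forall fun h => ?_⟩
    have h0 : 0 ≤ μ h x := (hμprob h).1 x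
    have h1 : μ h x ≤ 1 := by
      have := Finset.single_le_sum (f := μ h) (fun i _ => (hμprob h).1 i) (Finset.mem_univ x)
      rw [(hμprob h).2] at this
      exact this
    rw [Real.norm_eq_abs, abs_mul, norm_one, mul_one]
    calc |μ h x| * |W x y| ≤ 1 * |W x y| := by
          gcongr
          rw [abs_le]; constructor <;> linarith
      _ = |W x y| := one_mul _
  have := hbdd.mul_isLittleO (g_littleo b (V y - V x))
  simpa using this
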